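/- The sparing number of the Petersen graph is 3. -/

import Mathlib

open Pointwise

/-- The induced set-label on unordered pairs: the sumset of the two vertex labels. -/
def edgeLabel {V : Type*} (f : V → Finset ℕ) : Sym2 V → Finset ℕ :=
  Sym2.lift ⟨fun u v => f u + f v, fun u v => add_comm (f u) (f v)⟩

/-- `f` is a weak integer additive set-indexer of `G`. -/
structure IsWeakIASI {V : Type*} (G : SimpleGraph V) (f : V → Finset ℕ) : Prop where
  nonempty : ∀ v, (f v).Nonempty
  injective : Function.Injective f
  edgeInjective : Set.InjOn (edgeLabel f) G.edgeSet
  weak : ∀ u v, G.Adj u v → (edgeLabel f s(u, v)).card = max (f u).card (f v).card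

/-- The number of mono-indexed edges of `G` under the labeling `f`. -/
noncomputable def monoEdgeCount {V : Type*} (G : SimpleGraph V) (f : V → Finset ℕ) : ℕ :=
  {e ∈ G.edgeSet | (edgeLabel f e).card = 1}.ncard

/-- The sparing number: the minimum number of mono-indexed edges over all weak IASIs. -/
noncomputable def sparingNumber {V : Type*} (G : SimpleGraph V) : ℕ :=
  sInf {n | ∃ f, IsWeakIASI G f ∧ monoEdgeCount G f = n}

/-- The Petersen graph: outer 5-cycle `u₀…u₄`, inner pentagram `v₀…v₄` (`vᵢ ~ vᵢ₊₂`),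
and spokes `uᵢ ~ vᵢ`. -/
def petersenGraph : SimpleGraph (Fin 5 ⊕ Fin 5) :=
  SimpleGraph.fromRel (fun a b =>
    match a, b with
    | Sum.inl i, Sum.inl j => j = i + 1
    | Sum.inr i, Sum.inr j => j = i + 2
    | Sum.inl i, Sum.inr j => i = j
    | _, _ => False)

instance : DecidableRel petersenGraph.Adj := fun a b => by
  rw [petersenGraph]
  rcases a with i|i <;> rcases b with j|j <;>
    exact decidable_of_iff _ (SimpleGraph.fromRel_adj _ _ _).symm

/-! ### Generic lemmas -/

lemma edgeLabel_mk {V : Type*} (f : V → Finset ℕ) (u v : V) :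
    edgeLabel f s(u, v) = f u + f v := rfl

/-- `monoEdgeCount` as a `Finset` cardinality. -/
lemma monoEdgeCount_eq_card {V : Type*} [Fintype V] [DecidableEq V] (G : SimpleGraph V)
    [DecidableRel G.Adj] (f : V → Finset ℕ) :
    monoEdgeCount G f = (G.edgeFinset.filter (fun e => (edgeLabel f e).card = 1)).card := by
  rw [monoEdgeCount, ← Set.ncard_coe_finset]
  congr 1
  ext e
  simp [Set.mem_setOf_eq, SimpleGraph.mem_edgeFinset]

/-- Both labels at the ends of an edge of a weak IASI cannot have two elements. -/
lemma not_both_big {V : Type*} {G : SimpleGraph V} {f : V → Finset ℕ}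
    (h : IsWeakIASI G f) {u v : V} (huv : G.Adj u v)
    (hu : 2 ≤ (f u).card) (hv : 2 ≤ (f v).card) : False := by
  have hcd : (f u).card + (f v).card - 1 ≤ ((f u) + (f v)).card :=
    cauchy_davenport_add_of_linearOrder_isCancelAdd (h.nonempty u) (h.nonempty v)
  have hw := h.weak u v huv
  rw [edgeLabel_mk] at hw
  rw [hw] at hcd
  omega

/-! ### The witness labeling -/

def wf : Fin 5 ⊕ Fin 5 → Finset ℕ
  | Sum.inl i => if i = 0 ∨ i = 2 then {2^(i:ℕ), 2^(i:ℕ)+1} else {2^(i:ℕ)}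
  | Sum.inr i => if i = 3 ∨ i = 4 then {2^((i:ℕ)+5), 2^((i:ℕ)+5)+1} else {2^((i:ℕ)+5)}

lemma wf_edgeInj : ∀ a b c d, petersenGraph.Adj a b → petersenGraph.Adj c d →
    wf a + wf b = wf c + wf d → s(a,b) = s(c,d) := by decide

lemma wf_isWeakIASI : IsWeakIASI petersenGraph wf where
  nonempty := by decide
  injective := by intro a b h; revert h; revert a b; decide
  edgeInjective := by
    intro e₁ he₁ e₂ he₂ h
    induction e₁ using Sym2.inductionOn with
    | hf a b =>
      induction e₂ using Sym2.inductionOn with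
      | hf c d =>
        rw [SimpleGraph.mem_edgeSet] at he₁ he₂
        rw [edgeLabel_mk, edgeLabel_mk] at h
        exact wf_edgeInj a b c d he₁ he₂ h
  weak := by decide

lemma wf_mono : monoEdgeCount petersenGraph wf = 3 := by
  rw [monoEdgeCount_eq_card]
  decide

/-! ### Lower bound -/

lemma outer_indep : ∀ a b c : Fin 5, ¬petersenGraph.Adj (Sum.inl a) (Sum.inl b) →
    ¬petersenGraph.Adj (Sum.inl a) (Sum.inl c) → ¬petersenGraph.Adj (Sum.inl b) (Sum.inl c) →
    a = b ∨ a = c ∨ b = c := by decide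

lemma inner_indep : ∀ a b c : Fin 5, ¬petersenGraph.Adj (Sum.inr a) (Sum.inr b) →
    ¬petersenGraph.Adj (Sum.inr a) (Sum.inr c) → ¬petersenGraph.Adj (Sum.inr b) (Sum.inr c) →
    a = b ∨ a = c ∨ b = c := by decide

lemma petersen_edge_card : petersenGraph.edgeFinset.card = 15 := by decide

lemma petersen_degree : ∀ v, petersenGraph.degree v = 3 := by decide

/-- Any independent set in the Petersen graph has at most 4 vertices. -/
lemma indep_card_le (S : Finset (Fin 5 ⊕ Fin 5))
    (hS : ∀ u ∈ S, ∀ v ∈ S, ¬petersenGraph.Adj u v) : S.card ≤ 4 := by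
  classical
  set A : Finset (Fin 5) := Finset.univ.filter (fun i => Sum.inl i ∈ S) with hA
  set B : Finset (Fin 5) := Finset.univ.filter (fun i => Sum.inr i ∈ S) with hB
  have hSU : S = A.image Sum.inl ∪ B.image Sum.inr := by
    ext v
    rcases v with i | i <;> simp [hA, hB]
  have hA2 : A.card ≤ 2 := by
    by_contra h
    push_neg at h
    obtain ⟨a, b, c, ha, hb, hc, hab, hac, hbc⟩ := Finset.two_lt_card_iff.mp h
    rw [hA, Finset.mem_filter] at ha hb hc
    rcases outer_indep a b c (hS _ ha.2 _ hb.2) (hS _ ha.2 _ hc.2) (hS _ hb.2 _ hc.2) with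
      h | h | h
    exacts [hab h, hac h, hbc h]
  have hB2 : B.card ≤ 2 := by
    by_contra h
    push_neg at h
    obtain ⟨a, b, c, ha, hb, hc, hab, hac, hbc⟩ := Finset.two_lt_card_iff.mp h
    rw [hB, Finset.mem_filter] at ha hb hc
    rcases inner_indep a b c (hS _ ha.2 _ hb.2) (hS _ ha.2 _ hc.2) (hS _ hb.2 _ hc.2) with
      h | h | h
    exacts [hab h, hac h, hbc h]
  calc S.card ≤ (A.image Sum.inl).card + (B.image Sum.inr).card := by
        rw [hSU]; exact Finset.card_union_le _ _
    _ ≤ 4 := by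
        rw [Finset.card_image_of_injective _ Sum.inl_injective,
          Finset.card_image_of_injective _ Sum.inr_injective]
        omega

lemma lower_bound (f : (Fin 5 ⊕ Fin 5) → Finset ℕ) (hf : IsWeakIASI petersenGraph f) :
    3 ≤ monoEdgeCount petersenGraph f := by
  classical
  set G := petersenGraph
  set S : Finset (Fin 5 ⊕ Fin 5) := Finset.univ.filter (fun v => 2 ≤ (f v).card) with hSdef
  have hmemS : ∀ v, v ∈ S ↔ 2 ≤ (f v).card := by
    intro v; simp [hSdef]
  have hS : ∀ u ∈ S, ∀ v ∈ S, ¬G.Adj u v := by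
    intro u hu v hv hadj
    exact not_both_big hf hadj ((hmemS u).mp hu) ((hmemS v).mp hv)
  -- the mono edges are exactly the edges avoiding S
  have hmono : ∀ e ∈ G.edgeFinset, ((edgeLabel f e).card = 1 ↔ ∀ v ∈ e, v ∉ S) := by
    intro e he
    induction e using Sym2.inductionOn with
    | hf u v =>
      rw [SimpleGraph.mem_edgeFinset, SimpleGraph.mem_edgeSet] at he
      have hw := hf.weak u v he
      have hu1 := Finset.card_pos.mpr (hf.nonempty u)
      have hv1 := Finset.card_pos.mpr (hf.nonempty v)
      constructor
      · intro h1 w hw'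
        rw [Sym2.mem_iff] at hw'
        rw [hmemS]
        rcases hw' with rfl | rfl <;> omega
      · intro h2
        have hu := (hmemS u).not.mp (h2 u (Sym2.mem_mk_left u v))
        have hv := (hmemS v).not.mp (h2 v (Sym2.mem_mk_right u v))
        omega
  have hfilter : G.edgeFinset.filter (fun e => (edgeLabel f e).card = 1) =
      G.edgeFinset.filter (fun e => ∀ v ∈ e, v ∉ S) :=
    Finset.filter_congr hmono
  -- the edges meeting S are the union of incidence sets
  have hbiUnion : G.edgeFinset.filter (fun e => ¬ ∀ v ∈ e, v ∉ S) =
      S.biUnion (fun v => G.incidenceFinset v) := by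
    ext e
    simp only [Finset.mem_filter, Finset.mem_biUnion, SimpleGraph.mem_incidenceFinset,
      SimpleGraph.incidenceSet, Set.mem_setOf_eq, SimpleGraph.mem_edgeFinset]
    constructor
    · rintro ⟨he, h⟩
      push_neg at h
      obtain ⟨v, hv, hvS⟩ := h
      exact ⟨v, hvS, he, hv⟩
    · rintro ⟨v, hvS, he, hv⟩
      refine ⟨he, ?_⟩
      push_neg
      exact ⟨v, hv, hvS⟩
  have hdisj : ∀ u ∈ S, ∀ v ∈ S, u ≠ v →
      Disjoint (G.incidenceFinset u) (G.incidenceFinset v) := by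
    intro u hu v hv huv
    rw [Finset.disjoint_left]
    intro e heu hev
    rw [SimpleGraph.mem_incidenceFinset] at heu hev
    obtain ⟨heu1, heu2⟩ := heu
    obtain ⟨_, hev2⟩ := hev
    have : G.Adj u v := by
      induction e using Sym2.inductionOn with
      | hf a b =>
        rw [SimpleGraph.mem_edgeSet] at heu1
        rw [Sym2.mem_iff] at heu2 hev2
        rcases heu2 with rfl | rfl <;> rcases hev2 with rfl | rfl <;>
          first | exact absurd rfl huv | exact heu1 | exact heu1.symm
    exact hS u hu v hv this
  have hcard : (S.biUnion (fun v => G.incidenceFinset v)).card = 3 * S.card := by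
    rw [Finset.card_biUnion hdisj]
    have : ∀ v ∈ S, (G.incidenceFinset v).card = 3 := by
      intro v _
      rw [SimpleGraph.card_incidenceFinset_eq_degree]
      exact petersen_degree v
    rw [Finset.sum_congr rfl this, Finset.sum_const, smul_eq_mul, mul_comm]
  have hsplit := Finset.card_filter_add_card_filter_not
    (s := G.edgeFinset) (p := fun e => ∀ v ∈ e, v ∉ S)
  rw [hbiUnion, hcard, petersen_edge_card] at hsplit
  have hS4 : S.card ≤ 4 := indep_card_le S hS
  rw [monoEdgeCount_eq_card, hfilter]
  omega

/-- The sparing number of the Petersen graph is `3`. -/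
theorem sparingNumber_petersen : sparingNumber petersenGraph = 3 := by
  have hmem : 3 ∈ {n | ∃ f, IsWeakIASI petersenGraph f ∧ monoEdgeCount petersenGraph f = n} :=
    ⟨wf, wf_isWeakIASI, wf_mono⟩
  refine le_antisymm (Nat.sInf_le hmem) (le_csInf ⟨3, hmem⟩ ?_)
  rintro n ⟨f, hf, rfl⟩
  exact lower_bound f hf
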